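/- For an EAM mechanism, the strategy profile in which each student reports as acceptable only the school assigned to them by the serial dictatorship (with the same student ordering used by the EAM mechanism) under true preferences is a Nash equilibrium of the preference-reporting game, and every Nash equilibrium outcome of the EAM mechanism coincides with the serial dictatorship outcome under true preferences. -/

import Mathlib

set_option linter.unusedSectionVars false


open Finset
open scoped Classical

/-- A matching assigns each student a school or `none` (unassigned). -/
abbrev Matching (I S : Type*) := I → Option S

/-- An individual strict preference over `S ∪ {∅}`: an injective utility
function on `Option S` (higher value = more preferred, `none` = being
unassigned). -/
abbrev IndPref (S : Type*) := {f : Option S → ℕ // Function.Injective f}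

/-- A preference profile: one strict preference per student. -/
abbrev Prof (I S : Type*) := I → IndPref S

/-- Strict school priorities: for each school, an injective rank over
students (higher value = higher priority). -/
abbrev Prio (I S : Type*) := {p : S → I → ℕ // ∀ s, Function.Injective (p s)}

/-- A mechanism maps reported preference profiles to matchings. -/
abbrev Mechanism (I S : Type*) := Prof I S → Matching I S

variable {I S : Type*} [Fintype I] [DecidableEq I] [Fintype S] [DecidableEq S]

/-- Capacity feasibility. -/
def Feasible (q : S → ℕ) (μ : Matching I S) : Prop :=
  ∀ s : S, (univ.filter fun i => μ i = some s).card ≤ q s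

/-- Individual rationality with respect to profile `P`. -/
def IndivRational (P : Prof I S) (μ : Matching I S) : Prop :=
  ∀ i, (P i).1 none ≤ (P i).1 (μ i)

/-- Number of assigned students. -/
def msize (μ : Matching I S) : ℕ := (univ.filter fun i => μ i ≠ none).card

/-- Maximality: no feasible individually rational matching assigns strictly
more students. -/
def MaximalMatching (P : Prof I S) (q : S → ℕ) (μ : Matching I S) : Prop :=
  ∀ μ' : Matching I S, Feasible q μ' → IndivRational P μ' → msize μ' ≤ msize μ

/-- `μ'` Pareto dominates `μ`. -/
def Dominates (P : Prof I S) (μ' μ : Matching I S) : Prop :=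
  (∀ i, (P i).1 (μ i) ≤ (P i).1 (μ' i)) ∧ ∃ j, (P j).1 (μ j) < (P j).1 (μ' j)

/-- Pareto efficiency among feasible individually rational matchings. -/
def Efficient (P : Prof I S) (q : S → ℕ) (μ : Matching I S) : Prop :=
  ¬ ∃ μ', Feasible q μ' ∧ IndivRational P μ' ∧ Dominates P μ' μ

/-- Non-wastefulness. -/
def NonWasteful (P : Prof I S) (q : S → ℕ) (μ : Matching I S) : Prop :=
  ∀ i s, (P i).1 (μ i) < (P i).1 (some s) →
    (univ.filter fun j => μ j = some s).card = q s

/-- Fairness (no justified envy). -/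
def Fair (P : Prof I S) (pr : Prio I S) (μ : Matching I S) : Prop :=
  ¬ ∃ i s j, (P i).1 (μ i) < (P i).1 (some s) ∧ μ j = some s ∧ pr.1 s j < pr.1 s i

/-- Stability: individually rational, non-wasteful and fair. -/
def Stable (P : Prof I S) (pr : Prio I S) (q : S → ℕ) (μ : Matching I S) : Prop :=
  Feasible q μ ∧ IndivRational P μ ∧ NonWasteful P q μ ∧ Fair P pr μ

/-- Fairness for unassigned students. -/
def FairForUnassigned (P : Prof I S) (pr : Prio I S) (μ : Matching I S) : Prop :=
  ¬ ∃ i s j, μ i = none ∧ (P i).1 none < (P i).1 (some s) ∧ μ j = some s ∧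
    pr.1 s j < pr.1 s i

/-- `(a, t)` is an improving chain for `μ`: each student `a k` strictly
prefers `t k` to their assignment, each school `t k` (for `k < n`) is
currently occupied by the next student `a (k+1)`, and the last school has
excess capacity. -/
def IsImpChain (P : Prof I S) (q : S → ℕ) (μ : Matching I S)
    (n : ℕ) (a : Fin (n + 1) → I) (t : Fin (n + 1) → S) : Prop :=
  Function.Injective a ∧
  (∀ k, (P (a k)).1 (μ (a k)) < (P (a k)).1 (some (t k))) ∧
  (∀ k : Fin n, μ (a k.succ) = some (t k.castSucc)) ∧
  (univ.filter fun j => μ j = some (t (Fin.last n))).card < q (t (Fin.last n))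

/-- `(a, t)` is an improving cycle for `μ`: each student `a k` is assigned
to `t k` and strictly prefers the school `t (k+1)` vacated by the next
student in the cycle. -/
def IsImpCycle (P : Prof I S) (μ : Matching I S)
    (n : ℕ) (a : Fin (n + 1) → I) (t : Fin (n + 1) → S) : Prop :=
  Function.Injective a ∧
  (∀ k, μ (a k) = some (t k)) ∧
  (∀ k, (P (a k)).1 (some (t k)) < (P (a k)).1 (some (t (k + 1))))

def HasImpChain (P : Prof I S) (q : S → ℕ) (μ : Matching I S) : Prop :=
  ∃ n a t, IsImpChain P q μ n a t

def HasImpCycle (P : Prof I S) (μ : Matching I S) : Prop :=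
  ∃ n a t, IsImpCycle P μ n a t

/-- Implementing one improving chain or cycle: every student involved moves
to the school they prefer in the chain/cycle, all others keep their
assignment. -/
def ImplementStep (P : Prof I S) (q : S → ℕ) (μ μ' : Matching I S) : Prop :=
  (∃ n a t, IsImpChain P q μ n a t ∧ (∀ k, μ' (a k) = some (t k)) ∧
    ∀ j, (∀ k, j ≠ a k) → μ' j = μ j) ∨
  (∃ n a t, IsImpCycle P μ n a t ∧ (∀ k, μ' (a k) = some (t (k + 1))) ∧
    ∀ j, (∀ k, j ≠ a k) → μ' j = μ j)

/-- One refinement step of the first stage of EAM: keep only the matchings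
assigning student `i`, whenever such matchings exist. -/
noncomputable def xiStep (A : Set (Matching I S)) (i : I) : Set (Matching I S) :=
  if ∃ μ ∈ A, μ i ≠ none then {μ ∈ A | μ i ≠ none} else A

/-- The set `ξ^n` of the first stage of EAM, for the enumeration `L` of the
students, starting from all feasible individually rational matchings. -/
noncomputable def xiList (P : Prof I S) (q : S → ℕ) (L : List I) :
    Set (Matching I S) :=
  L.foldl xiStep {μ | Feasible q μ ∧ IndivRational P μ}

/-- `μ` is a possible outcome of an EAM procedure with student enumeration
`L`: it is reachable from some matching selected in the first stage by
implementing improving chains/cycles, and admits no further improving chain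
or cycle. -/
def IsEAMOutcome (P : Prof I S) (q : S → ℕ) (L : List I) (μ : Matching I S) :
    Prop :=
  ∃ μ₀ ∈ xiList P q L, Relation.ReflTransGen (ImplementStep P q) μ₀ μ ∧
    ¬ HasImpChain P q μ ∧ ¬ HasImpCycle P μ

/-- EAM mechanisms with enumeration `L`. -/
def IsEAMMech (q : S → ℕ) (L : List I) (ψ : Mechanism I S) : Prop :=
  ∀ P, IsEAMOutcome P q L (ψ P)

/-- One sub-step of Step 2 of FAM: a pair `(i, s)` violating fairness for
unassigned students is resolved by placing `i` at `s` and unassigning the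
lowest-priority student currently matched to `s`. -/
def FairStep (P : Prof I S) (pr : Prio I S) (μ μ' : Matching I S) : Prop :=
  ∃ i s j, μ i = none ∧ (P i).1 none < (P i).1 (some s) ∧ μ j = some s ∧
    pr.1 s j < pr.1 s i ∧ (∀ j', μ j' = some s → pr.1 s j ≤ pr.1 s j') ∧
    μ' = Function.update (Function.update μ j none) i (some s)

/-- FAM mechanisms: an EAM first stage followed by iterated resolution of
violations of fairness for unassigned students. -/
def IsFAMMech (q : S → ℕ) (pr : Prio I S) (L : List I) (ψ : Mechanism I S) :
    Prop :=
  ∀ P, ∃ μ₁, IsEAMOutcome P q L μ₁ ∧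
    Relation.ReflTransGen (FairStep P pr) μ₁ (ψ P) ∧
    FairForUnassigned P pr (ψ P)

/-- Individually rational mechanism (with respect to reports). -/
def IRMech (q : S → ℕ) (ψ : Mechanism I S) : Prop :=
  ∀ P, Feasible q (ψ P) ∧ IndivRational P (ψ P)

/-- MaximalMatching mechanism. -/
def MaximalMech (q : S → ℕ) (ψ : Mechanism I S) : Prop :=
  IRMech q ψ ∧ ∀ P, MaximalMatching P q (ψ P)

/-- Nash equilibrium of the preference-reporting game induced by `ψ`, with
true preferences `u`. -/
def NashEq (u : Prof I S) (ψ : Mechanism I S) (P' : Prof I S) : Prop :=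
  ∀ (i : I) (Pi'' : IndPref S),
    (u i).1 (ψ (Function.update P' i Pi'') i) ≤ (u i).1 (ψ P' i)

/-- Strategy-proofness. -/
def StrategyProof (ψ : Mechanism I S) : Prop :=
  ∀ (P : Prof I S) (i : I) (Pi' : IndPref S),
    (P i).1 (ψ (Function.update P i Pi') i) ≤ (P i).1 (ψ P i)

/-- A maximizer of `f` on the nonempty finite set `A`. -/
noncomputable def bestOf (f : Option S → ℕ) (A : Finset (Option S))
    (h : A.Nonempty) : Option S :=
  (Finset.exists_max_image A f h).choose

/-- Serial dictatorship: students pick, in the order given, their most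
preferred option among `none` and the schools with remaining capacity. -/
noncomputable def sdRun (P : Prof I S) :
    List I → (S → ℕ) → Matching I S → Matching I S
  | [], _, μ => μ
  | i :: rest, rem, μ =>
    let c := bestOf (P i).1 (insert none ((univ.filter fun s => 0 < rem s).image some))
      (insert_nonempty _ _)
    sdRun P rest (fun s => if c = some s then rem s - 1 else rem s)
      (Function.update μ i c)

/-- The serial dictatorship outcome with ordering `L` and capacities `q`. -/
noncomputable def SD (P : Prof I S) (q : S → ℕ) (L : List I) : Matching I S :=
  sdRun P L q fun _ => none


variable {I S : Type*} [Fintype I] [DecidableEq I] [Fintype S] [DecidableEq S]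

/-! ### Auxiliary lemmas -/

section AuxLemmas

lemma bestOf_mem (f : Option S → ℕ) (A : Finset (Option S)) (h : A.Nonempty) :
    bestOf f A h ∈ A :=
  (Finset.exists_max_image A f h).choose_spec.1

lemma bestOf_le (f : Option S → ℕ) (A : Finset (Option S)) (h : A.Nonempty)
    {x : Option S} (hx : x ∈ A) : f x ≤ f (bestOf f A h) :=
  (Finset.exists_max_image A f h).choose_spec.2 x hx

/-- The single-acceptable-option property: the options strictly better than
being unassigned are exactly those equal to `c`. -/
def OnlyAcc (f : IndPref S) (c : Option S) : Prop :=
  ∀ s : S, f.1 none < f.1 (some s) ↔ some s = c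

lemma OnlyAcc.top {f : IndPref S} {c : Option S} (h : OnlyAcc f c) (x : Option S) :
    f.1 x ≤ f.1 c := by
  cases c with
  | none =>
    cases x with
    | none => exact le_refl _
    | some s =>
      by_contra hx
      push_neg at hx
      exact Option.some_ne_none s ((h s).1 hx)
  | some s0 =>
    cases x with
    | none => exact le_of_lt ((h s0).2 rfl)
    | some s =>
      rcases eq_or_ne s s0 with rfl | hne
      · exact le_refl _
      · have h1 : ¬ f.1 none < f.1 (some s) := fun hl => hne (by simpa using (h s).1 hl)
        exact le_trans (not_lt.1 h1) (le_of_lt ((h s0).2 rfl))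

lemma OnlyAcc.ir_eq {f : IndPref S} {c : Option S} (h : OnlyAcc f c)
    {x : Option S} (hx : f.1 none ≤ f.1 x) : x = none ∨ x = c := by
  cases x with
  | none => exact Or.inl rfl
  | some s =>
    right
    have hne : f.1 none ≠ f.1 (some s) := fun he => by
      have := f.2 he; simp at this
    exact (h s).1 (lt_of_le_of_ne hx hne)

/-- A utility function whose unique acceptable option is `c`. -/
noncomputable def spFun (c : Option S) : Option S → ℕ := fun x =>
  Option.elim x (Fintype.card S)
    (fun s' => if some s' = c then Fintype.card S + 1 else (Fintype.equivFin S s').val)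

lemma spFun_inj (c : Option S) : Function.Injective (spFun (S := S) c) := by
  have hlt : ∀ s : S, ((Fintype.equivFin S) s).val < Fintype.card S :=
    fun s => ((Fintype.equivFin S) s).isLt
  intro x y hxy
  cases x with
  | none =>
    cases y with
    | none => rfl
    | some s =>
      simp only [spFun, Option.elim] at hxy
      split at hxy
      · omega
      · exact absurd hxy.symm (Nat.ne_of_lt (hlt s))
  | some s =>
    cases y with
    | none =>
      simp only [spFun, Option.elim] at hxy
      split at hxy
      · omega
      · exact absurd hxy (Nat.ne_of_lt (hlt s))
    | some s' =>
      simp only [spFun, Option.elim] at hxy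
      split at hxy <;> split at hxy
      · rename_i h1 h2; exact h1.trans h2.symm
      · exact absurd hxy.symm (Nat.ne_of_lt (Nat.lt_succ_of_lt (hlt s')))
      · exact absurd hxy (Nat.ne_of_lt (Nat.lt_succ_of_lt (hlt s)))
      · exact congrArg some ((Fintype.equivFin S).injective (Fin.ext hxy))

noncomputable def singlePref (c : Option S) : IndPref S := ⟨spFun c, spFun_inj c⟩

lemma onlyAcc_singlePref (c : Option S) : OnlyAcc (singlePref c) c := by
  intro s
  simp only [singlePref, spFun, Option.elim]
  split
  · rename_i h; simp [h]
  · rename_i h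
    constructor
    · intro hl; exact absurd (le_of_lt hl) (not_le.2 ((Fintype.equivFin S s).isLt))
    · intro hc; exact absurd hc h

/-! ### `xiStep` and `xiList` lemmas -/

lemma xiStep_subset (A : Set (Matching I S)) (i : I) : xiStep A i ⊆ A := by
  unfold xiStep
  split
  · exact fun μ hμ => hμ.1
  · exact fun μ hμ => hμ

lemma foldl_xiStep_subset (M : List I) :
    ∀ (A : Set (Matching I S)), M.foldl xiStep A ⊆ A := by
  induction M with
  | nil => exact fun A => le_refl _
  | cons j M ih =>
    intro A
    rw [List.foldl_cons]
    exact (ih (xiStep A j)).trans (xiStep_subset A j)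

lemma mem_foldl_xiStep (M : List I) :
    ∀ (A : Set (Matching I S)) (μ ν : Matching I S),
      μ ∈ M.foldl xiStep A → ν ∈ A → (∀ j ∈ M, μ j ≠ none → ν j ≠ none) →
      ν ∈ M.foldl xiStep A := by
  induction M with
  | nil => intro A μ ν hμ hν _; simpa using hν
  | cons j M ih =>
    intro A μ ν hμ hν hjs
    rw [List.foldl_cons] at hμ ⊢
    refine ih _ μ ν hμ ?_ (fun j' hj' => hjs j' (List.mem_cons_of_mem _ hj'))
    by_cases hex : ∃ μ' ∈ A, μ' j ≠ none
    · have hA : xiStep A j = {μ' ∈ A | μ' j ≠ none} := by rw [xiStep, if_pos hex]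
      have hμA : μ ∈ xiStep A j := foldl_xiStep_subset M _ hμ
      rw [hA] at hμA ⊢
      exact ⟨hν, hjs j (List.mem_cons_self) hμA.2⟩
    · rw [xiStep, if_neg hex]; exact hν

lemma foldl_xiStep_pair (i : I) (M : List I) (hi : i ∉ M) :
    ∀ (AQ AR : Set (Matching I S)),
      (∀ μ ∈ AQ, Function.update μ i none ∈ AR) →
      (∀ μ ∈ AR, Function.update μ i none ∈ AQ) →
      (∀ μ ∈ M.foldl xiStep AQ, Function.update μ i none ∈ M.foldl xiStep AR) ∧
      (∀ μ ∈ M.foldl xiStep AR, Function.update μ i none ∈ M.foldl xiStep AQ) := by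
  induction M with
  | nil => intro AQ AR h1 h2; exact ⟨h1, h2⟩
  | cons j M ih =>
    intro AQ AR h1 h2
    have hji : j ≠ i := fun h => hi (h ▸ List.mem_cons_self)
    have hMi : i ∉ M := fun h => hi (List.mem_cons_of_mem _ h)
    rw [List.foldl_cons, List.foldl_cons]
    have hiff : (∃ μ ∈ AQ, μ j ≠ none) ↔ (∃ μ ∈ AR, μ j ≠ none) := by
      constructor
      · rintro ⟨μ, hμ, hj⟩
        exact ⟨_, h1 μ hμ, by simpa [Function.update_of_ne hji] using hj⟩
      · rintro ⟨μ, hμ, hj⟩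
        exact ⟨_, h2 μ hμ, by simpa [Function.update_of_ne hji] using hj⟩
    by_cases hex : ∃ μ ∈ AQ, μ j ≠ none
    · have hexR := hiff.1 hex
      rw [xiStep, if_pos hex, xiStep, if_pos hexR]
      refine ih hMi _ _ ?_ ?_
      · rintro μ ⟨hμ, hj⟩
        exact ⟨h1 μ hμ, by simpa [Function.update_of_ne hji] using hj⟩
      · rintro μ ⟨hμ, hj⟩
        exact ⟨h2 μ hμ, by simpa [Function.update_of_ne hji] using hj⟩
    · rw [xiStep, if_neg hex, xiStep, if_neg (fun h => hex (hiff.2 h))]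
      exact ih hMi _ _ h1 h2

lemma foldl_xiStep_forced (Q : Prof I S) (q : S → ℕ) (c : I → Option S) (M : List I) :
    ∀ (A : Set (Matching I S)) (w : Matching I S),
      A ⊆ {μ | Feasible q μ ∧ IndivRational Q μ} →
      w ∈ A → (∀ j ∈ M, w j = c j) → (∀ j ∈ M, OnlyAcc (Q j) (c j)) →
      ∀ μ ∈ M.foldl xiStep A, ∀ j ∈ M, μ j = c j := by
  induction M with
  | nil => intro A w _ _ _ _ μ _ j hj; simp at hj
  | cons j M ih =>
    intro A w hA hw hwc hacc μ hμ j' hj'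
    rw [List.foldl_cons] at hμ
    have hacc_j : OnlyAcc (Q j) (c j) := hacc j (List.mem_cons_self)
    cases hcj : c j with
    | none =>
      have hno : ¬ ∃ μ' ∈ A, μ' j ≠ none := by
        rintro ⟨μ', hμ', hne⟩
        rcases hacc_j.ir_eq ((hA hμ').2 j) with h | h
        · exact hne h
        · exact hne (h.trans hcj)
      have hstep : xiStep A j = A := by rw [xiStep, if_neg hno]
      rw [hstep] at hμ
      rcases List.mem_cons.1 hj' with rfl | hj'2
      · rcases hacc_j.ir_eq ((hA (foldl_xiStep_subset M A hμ)).2 j') with h | h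
        · rw [h, hcj]
        · exact h
      · exact ih A w hA hw (fun j'' h => hwc _ (List.mem_cons_of_mem _ h))
          (fun j'' h => hacc _ (List.mem_cons_of_mem _ h)) μ hμ j' hj'2
    | some s =>
      have hwj : w j = c j := hwc j (List.mem_cons_self)
      have hex : ∃ μ' ∈ A, μ' j ≠ none := ⟨w, hw, by rw [hwj, hcj]; simp⟩
      have hstep : xiStep A j = {μ' ∈ A | μ' j ≠ none} := by rw [xiStep, if_pos hex]
      rw [hstep] at hμ
      have hsub : {μ' ∈ A | μ' j ≠ none} ⊆ A := fun _ h => h.1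
      have hw' : w ∈ {μ' ∈ A | μ' j ≠ none} := ⟨hw, by rw [hwj, hcj]; simp⟩
      rcases List.mem_cons.1 hj' with rfl | hj'2
      · have hμ' : μ ∈ {μ'' ∈ A | μ'' j' ≠ none} := foldl_xiStep_subset M _ hμ
        rcases hacc_j.ir_eq ((hA hμ'.1).2 j') with h | h
        · exact absurd h hμ'.2
        · exact h
      · exact ih _ w (hsub.trans hA) hw' (fun j'' h => hwc _ (List.mem_cons_of_mem _ h))
          (fun j'' h => hacc _ (List.mem_cons_of_mem _ h)) μ hμ j' hj'2

/-! ### Implementing improving chains/cycles preserves invariants -/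

lemma card_override {m : ℕ} (μ μ' : Matching I S) (a : Fin m → I)
    (ha : Function.Injective a) (f : Fin m → Option S)
    (h1 : ∀ k, μ' (a k) = f k) (h2 : ∀ j, (∀ k, j ≠ a k) → μ' j = μ j) (s : S) :
    (univ.filter fun j => μ' j = some s).card
      + (univ.filter fun k => μ (a k) = some s).card
    = (univ.filter fun j => μ j = some s).card
      + (univ.filter fun k => f k = some s).card := by
  classical
  have key : ∀ (ν : Matching I S) (g : Fin m → Option S), (∀ k, ν (a k) = g k) →
      (univ.filter fun j => ν j = some s).card
        = (univ.filter fun j => ν j = some s ∧ ∀ k, j ≠ a k).card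
          + (univ.filter fun k => g k = some s).card := by
    intro ν g hg
    have hsplit : (univ.filter fun j => ν j = some s)
        = (univ.filter fun j => ν j = some s ∧ ∀ k, j ≠ a k)
          ∪ ((univ.filter fun k => g k = some s).image a) := by
      ext j
      simp only [mem_filter, mem_union, mem_image, mem_univ, true_and]
      constructor
      · intro hj
        by_cases hall : ∀ k, j ≠ a k
        · exact Or.inl ⟨hj, hall⟩
        · push_neg at hall
          obtain ⟨k, rfl⟩ := hall
          exact Or.inr ⟨k, ⟨(hg k).symm.trans hj, rfl⟩⟩
      · rintro (⟨hj, _⟩ | ⟨k, hk, rfl⟩)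
        · exact hj
        · exact (hg k).trans hk
    have hdisj : Disjoint (univ.filter fun j => ν j = some s ∧ ∀ k, j ≠ a k)
        ((univ.filter fun k => g k = some s).image a) := by
      rw [Finset.disjoint_left]
      rintro j hj hj'
      obtain ⟨k, _, rfl⟩ := Finset.mem_image.1 hj'
      exact (mem_filter.1 hj).2.2 k rfl
    rw [hsplit, Finset.card_union_of_disjoint hdisj,
      Finset.card_image_of_injective _ ha]
  have k1 := key μ' f h1
  have k2 := key μ (fun k => μ (a k)) (fun k => rfl)
  have hcongr : (univ.filter fun j => μ' j = some s ∧ ∀ k, j ≠ a k)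
      = (univ.filter fun j => μ j = some s ∧ ∀ k, j ≠ a k) := by
    apply Finset.filter_congr
    intro j _
    constructor
    · rintro ⟨hj, hall⟩; exact ⟨(h2 j hall) ▸ hj, hall⟩
    · rintro ⟨hj, hall⟩; exact ⟨(h2 j hall).symm ▸ hj, hall⟩
  rw [k1, k2, hcongr]
  ring

lemma chain_count {n : ℕ} (μ : Matching I S) (a : Fin (n+1) → I) (t : Fin (n+1) → S)
    (h3 : ∀ k : Fin n, μ (a k.succ) = some (t k.castSucc)) (s : S) :
    (univ.filter fun k : Fin (n+1) => t k = s).card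
      ≤ (univ.filter fun k : Fin (n+1) => μ (a k) = some s).card
        + (if t (Fin.last n) = s then 1 else 0) := by
  classical
  set A := (univ.filter fun k : Fin (n+1) => t k = s).erase (Fin.last n) with hA
  have hle : A.card ≤ (univ.filter fun k : Fin (n+1) => μ (a k) = some s).card := by
    apply Finset.card_le_card_of_injOn
      (fun k => if h : k.val < n then (⟨k.val + 1, Nat.succ_lt_succ h⟩ : Fin (n+1)) else k)
    · intro k hk
      have hkne : k ≠ Fin.last n := (Finset.mem_erase.1 hk).1
      have hklt : k.val < n := by
        have := k.isLt
        rcases Nat.lt_or_ge k.val n with h | h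
        · exact h
        · exact absurd (Fin.ext (by omega : k.val = n)) hkne
      have hts : t k = s := (mem_filter.1 (Finset.mem_erase.1 hk).2).2
      simp only [Finset.mem_coe]
      rw [dif_pos hklt]
      refine mem_filter.2 ⟨mem_univ _, ?_⟩
      have := h3 ⟨k.val, hklt⟩
      have hsucc : (⟨k.val, hklt⟩ : Fin n).succ = (⟨k.val + 1, Nat.succ_lt_succ hklt⟩ : Fin (n+1)) := rfl
      have hcast : (⟨k.val, hklt⟩ : Fin n).castSucc = k := Fin.ext rfl
      rw [hsucc, hcast] at this
      rw [this, hts]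
    · intro k hk k' hk' heq
      have hklt : k.val < n := by
        have hkne : k ≠ Fin.last n := (Finset.mem_erase.1 hk).1
        rcases Nat.lt_or_ge k.val n with h | h
        · exact h
        · exact absurd (Fin.ext (by have := k.isLt; omega : k.val = n)) hkne
      have hklt' : k'.val < n := by
        have hkne : k' ≠ Fin.last n := (Finset.mem_erase.1 hk').1
        rcases Nat.lt_or_ge k'.val n with h | h
        · exact h
        · exact absurd (Fin.ext (by have := k'.isLt; omega : k'.val = n)) hkne
      simp only [dif_pos hklt, dif_pos hklt'] at heq
      have : k.val + 1 = k'.val + 1 := congrArg Fin.val heq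
      exact Fin.ext (by omega)
  by_cases hl : t (Fin.last n) = s
  · have hmem : Fin.last n ∈ univ.filter fun k : Fin (n+1) => t k = s :=
      mem_filter.2 ⟨mem_univ _, hl⟩
    have herase := Finset.card_erase_add_one hmem
    rw [← hA] at herase
    rw [if_pos hl]
    omega
  · have : A = univ.filter fun k : Fin (n+1) => t k = s :=
      Finset.erase_eq_of_notMem (fun h => hl (mem_filter.1 h).2)
    rw [if_neg hl, ← this]
    omega

lemma cycle_count {n : ℕ} (t : Fin (n+1) → S) (s : S) :
    (univ.filter fun k : Fin (n+1) => t (k+1) = s).card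
      = (univ.filter fun k : Fin (n+1) => t k = s).card := by
  classical
  refine Finset.card_bij' (fun k _ => k + 1) (fun k _ => k - 1) ?_ ?_ ?_ ?_
  · intro k hk
    exact mem_filter.2 ⟨mem_univ _, (mem_filter.1 hk).2⟩
  · intro k hk
    refine mem_filter.2 ⟨mem_univ _, ?_⟩
    rw [sub_add_cancel]
    exact (mem_filter.1 hk).2
  · intro k _
    rw [add_sub_cancel_right]
  · intro k _
    rw [sub_add_cancel]

lemma implementStep_feasible {Q : Prof I S} {q : S → ℕ} {μ μ' : Matching I S}
    (hfe : Feasible q μ) (h : ImplementStep Q q μ μ') : Feasible q μ' := by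
  intro s
  rcases h with ⟨n, a, t, ⟨ha, himp, hmid, hlast⟩, hset, hout⟩ |
    ⟨n, a, t, ⟨ha, hmatch, himp⟩, hset, hout⟩
  · have hco := card_override μ μ' a ha (fun k => some (t k)) hset hout s
    have hcc := chain_count μ a t hmid s
    have heq1 : (univ.filter fun k : Fin (n+1) => (some (t k) : Option S) = some s)
        = univ.filter fun k : Fin (n+1) => t k = s := by
      apply Finset.filter_congr; intro k _; simp
    rw [heq1] at hco
    have hq := hfe s
    by_cases hl : t (Fin.last n) = s
    · rw [if_pos hl] at hcc
      rw [hl] at hlast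
      omega
    · rw [if_neg hl] at hcc
      omega
  · have hco := card_override μ μ' a ha (fun k => some (t (k+1))) hset hout s
    have heq1 : (univ.filter fun k : Fin (n+1) => (some (t (k+1)) : Option S) = some s)
        = univ.filter fun k : Fin (n+1) => t (k+1) = s := by
      apply Finset.filter_congr; intro k _; simp
    have heq2 : (univ.filter fun k : Fin (n+1) => μ (a k) = some s)
        = univ.filter fun k : Fin (n+1) => t k = s := by
      apply Finset.filter_congr; intro k _; rw [hmatch k]; simp
    rw [heq1, heq2, cycle_count] at hco
    have hq := hfe s
    omega

lemma implementStep_ir {Q : Prof I S} {q : S → ℕ} {μ μ' : Matching I S}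
    (hir : IndivRational Q μ) (h : ImplementStep Q q μ μ') : IndivRational Q μ' := by
  intro j
  rcases h with ⟨n, a, t, hc, hset, hout⟩ | ⟨n, a, t, hc, hset, hout⟩
  · by_cases hj : ∀ k, j ≠ a k
    · rw [hout j hj]; exact hir j
    · push_neg at hj; obtain ⟨k, rfl⟩ := hj
      rw [hset k]
      exact le_of_lt (lt_of_le_of_lt (hir _) (hc.2.1 k))
  · by_cases hj : ∀ k, j ≠ a k
    · rw [hout j hj]; exact hir j
    · push_neg at hj; obtain ⟨k, rfl⟩ := hj
      rw [hset k]
      have h2 := hc.2.2 k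
      rw [← hc.2.1 k] at h2
      exact le_of_lt (lt_of_le_of_lt (hir _) h2)

lemma implementStep_ne {Q : Prof I S} {q : S → ℕ} {μ μ' : Matching I S}
    (h : ImplementStep Q q μ μ') (j : I) (hj : μ j ≠ none) : μ' j ≠ none := by
  rcases h with ⟨n, a, t, hc, hset, hout⟩ | ⟨n, a, t, hc, hset, hout⟩ <;>
  · by_cases hja : ∀ k, j ≠ a k
    · rw [hout j hja]; exact hj
    · push_neg at hja; obtain ⟨k, rfl⟩ := hja; rw [hset k]; simp

lemma implementStep_fix {Q : Prof I S} {q : S → ℕ} {μ μ' : Matching I S} (j : I)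
    (htop : ∀ s : S, (Q j).1 (some s) ≤ (Q j).1 (μ j))
    (h : ImplementStep Q q μ μ') : μ' j = μ j := by
  rcases h with ⟨n, a, t, hc, hset, hout⟩ | ⟨n, a, t, hc, hset, hout⟩
  · refine hout j fun k hk => ?_
    subst hk
    exact absurd (hc.2.1 k) (not_lt.2 (htop (t k)))
  · refine hout j fun k hk => ?_
    subst hk
    have h2 := hc.2.2 k
    rw [← hc.2.1 k] at h2
    exact absurd h2 (not_lt.2 (htop _))

lemma rtg_invariants {Q : Prof I S} {q : S → ℕ} {μ₀ μ : Matching I S}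
    (h : Relation.ReflTransGen (ImplementStep Q q) μ₀ μ) :
    (Feasible q μ₀ → Feasible q μ) ∧ (IndivRational Q μ₀ → IndivRational Q μ) ∧
    (∀ j, μ₀ j ≠ none → μ j ≠ none) ∧
    (∀ (j : I) (c : Option S), (∀ x, (Q j).1 x ≤ (Q j).1 c) → μ₀ j = c → μ j = c) := by
  induction h with
  | refl => exact ⟨id, id, fun j => id, fun j c _ h => h⟩
  | tail hab hbc ih =>
    refine ⟨fun h => implementStep_feasible (ih.1 h) hbc,
      fun h => implementStep_ir (ih.2.1 h) hbc,
      fun j hj => implementStep_ne hbc j (ih.2.2.1 j hj),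
      fun j c htop h0 => ?_⟩
    have hb := ih.2.2.2 j c htop h0
    have hfix := implementStep_fix j (fun s => by rw [hb]; exact htop (some s)) hbc
    rw [hfix, hb]

/-! ### Serial dictatorship lemmas -/

lemma sdRun_nil (P : Prof I S) (rem : S → ℕ) (μ0 : Matching I S) :
    sdRun P [] rem μ0 = μ0 := rfl

lemma sdRun_cons (P : Prof I S) (i : I) (rest : List I) (rem : S → ℕ) (μ0 : Matching I S) :
    sdRun P (i :: rest) rem μ0 =
      sdRun P rest
        (fun s => if bestOf (P i).1
            (insert none ((univ.filter fun s => 0 < rem s).image some))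
            (insert_nonempty _ _) = some s then rem s - 1 else rem s)
        (Function.update μ0 i (bestOf (P i).1
          (insert none ((univ.filter fun s => 0 < rem s).image some))
          (insert_nonempty _ _))) := rfl

lemma sdRun_fix (P : Prof I S) : ∀ (M : List I) (rem : S → ℕ) (μ0 : Matching I S)
    (j : I), j ∉ M → sdRun P M rem μ0 j = μ0 j := by
  intro M
  induction M with
  | nil => intros; rfl
  | cons i rest ih =>
    intro rem μ0 j hj
    rw [sdRun_cons, ih _ _ _ (fun h => hj (List.mem_cons_of_mem _ h)),
      Function.update_of_ne (fun h : j = i => hj (by rw [h]; exact List.mem_cons_self))]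

lemma cons_decomp {i hd : I} {rest L₁ L₂ : List I}
    (h : hd :: rest = L₁ ++ i :: L₂) (hne : i ≠ hd) :
    ∃ L₁', L₁ = hd :: L₁' ∧ rest = L₁' ++ i :: L₂ := by
  cases L₁ with
  | nil => simp at h; exact absurd h.1.symm hne
  | cons a L₁' =>
    simp only [List.cons_append, List.cons.injEq] at h
    exact ⟨L₁', by rw [h.1], h.2⟩

lemma sdRun_spec (P : Prof I S) : ∀ (M : List I) (rem : S → ℕ) (μ0 : Matching I S),
    M.Nodup →
    (∀ s, ((M.toFinset.filter fun j => sdRun P M rem μ0 j = some s)).card ≤ rem s) ∧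
    (∀ L₁ i L₂, M = L₁ ++ i :: L₂ →
      ((P i).1 none ≤ (P i).1 (sdRun P M rem μ0 i)) ∧
      (∀ s, (L₁.toFinset.filter fun j => sdRun P M rem μ0 j = some s).card < rem s →
        (P i).1 (some s) ≤ (P i).1 (sdRun P M rem μ0 i)) ∧
      (∀ s, sdRun P M rem μ0 i = some s →
        (L₁.toFinset.filter fun j => sdRun P M rem μ0 j = some s).card < rem s)) := by
  intro M
  induction M with
  | nil =>
    intro rem μ0 _
    refine ⟨fun s => by simp, fun L₁ i L₂ h => absurd h (by simp)⟩
  | cons hd rest ih =>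
    intro rem μ0 hnd
    have hhd : hd ∉ rest := (List.nodup_cons.1 hnd).1
    have hndr : rest.Nodup := (List.nodup_cons.1 hnd).2
    set c := bestOf (P hd).1 (insert none ((univ.filter fun s => 0 < rem s).image some))
      (insert_nonempty _ _) with hc
    set rem' := fun s => if c = some s then rem s - 1 else rem s with hrem'
    set μ1 := Function.update μ0 hd c with hμ1
    have hrun : sdRun P (hd :: rest) rem μ0 = sdRun P rest rem' μ1 := sdRun_cons P hd rest rem μ0
    set ν := sdRun P rest rem' μ1 with hν
    have hνhd : ν hd = c := by
      rw [hν, sdRun_fix P rest rem' μ1 hd hhd, hμ1, Function.update_self]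
    have hpos : ∀ s, c = some s → 0 < rem s := by
      intro s hs
      have := bestOf_mem (P hd).1 (insert none ((univ.filter fun s => 0 < rem s).image some))
        (insert_nonempty _ _)
      rw [← hc, hs] at this
      rcases Finset.mem_insert.1 this with h | h
      · exact absurd h (by simp)
      · obtain ⟨s', hs', heq⟩ := Finset.mem_image.1 h
        rw [← Option.some.inj heq]
        exact (mem_filter.1 hs').2
    obtain ⟨ihcap, ihpre⟩ := ih rem' μ1 hndr
    rw [← hν] at ihcap ihpre
    rw [hrun]
    constructor
    · intro s
      rw [List.toFinset_cons]
      have hhdf : hd ∉ rest.toFinset := fun h => hhd (List.mem_toFinset.1 h)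
      rw [Finset.filter_insert]
      by_cases hcs : ν hd = some s
      · rw [if_pos hcs, Finset.card_insert_of_notMem (fun h => hhdf (mem_filter.1 h).1)]
        have h1 := ihcap s
        have h2 : 0 < rem s := hpos s (hνhd ▸ hcs)
        have h3 : rem' s = rem s - 1 := by simp only [hrem']; rw [if_pos (hνhd ▸ hcs)]
        omega
      · rw [if_neg hcs]
        have h1 := ihcap s
        rcases eq_or_ne c (some s) with hcs' | hcs'
        · exact absurd (hνhd.trans hcs') hcs
        · have : rem' s = rem s := by simp only [hrem']; rw [if_neg hcs']
          omega
    · intro L₁ i L₂ hdec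
      rcases eq_or_ne i hd with rfl | hine
      · -- L₁ must be [] since i = hd ∉ rest
        have hL₁ : L₁ = [] := by
          cases L₁ with
          | nil => rfl
          | cons a L₁' =>
            simp only [List.cons_append, List.cons.injEq] at hdec
            exact absurd (hdec.2 ▸ (List.mem_append_right L₁' (List.mem_cons_self))) hhd
        subst hL₁
        have hνi : ν i = c := hνhd
        refine ⟨?_, ?_, ?_⟩
        · rw [hνi, hc]
          exact bestOf_le _ _ _ (Finset.mem_insert_self _ _)
        · intro s hs
          simp only [List.toFinset_nil, Finset.filter_empty, Finset.card_empty] at hs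
          rw [hνi, hc]
          exact bestOf_le _ _ _ (Finset.mem_insert_of_mem
            (Finset.mem_image_of_mem some (mem_filter.2 ⟨mem_univ _, hs⟩)))
        · intro s hs
          simp only [List.toFinset_nil, Finset.filter_empty, Finset.card_empty]
          exact hpos s (hνi ▸ hs)
      · obtain ⟨L₁', hL₁, hrest⟩ := cons_decomp hdec hine
        have hL₁'sub : hd ∉ L₁' := fun h => hhd (hrest ▸ List.mem_append_left _ h)
        obtain ⟨ih1, ih2, ih3⟩ := ihpre L₁' i L₂ hrest
        have hcard : ∀ s, (L₁.toFinset.filter fun j => ν j = some s).card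
            = (if c = some s then 1 else 0)
              + (L₁'.toFinset.filter fun j => ν j = some s).card := by
          intro s
          rw [hL₁, List.toFinset_cons, Finset.filter_insert]
          by_cases hcs : ν hd = some s
          · rw [if_pos hcs, if_pos (hνhd ▸ hcs),
              Finset.card_insert_of_notMem
                (fun h => hL₁'sub (List.mem_toFinset.1 (mem_filter.1 h).1))]
            omega
          · rw [if_neg hcs, if_neg (fun h => hcs (hνhd.trans h))]
            omega
        refine ⟨ih1, ?_, ?_⟩
        · intro s hs
          rw [hcard s] at hs
          apply ih2 s
          rcases eq_or_ne c (some s) with hcs | hcs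
          · rw [if_pos hcs] at hs
            have : rem' s = rem s - 1 := by simp only [hrem']; rw [if_pos hcs]
            omega
          · rw [if_neg hcs] at hs
            have : rem' s = rem s := by simp only [hrem']; rw [if_neg hcs]
            omega
        · intro s hs
          rw [hcard s]
          have h1 := ih3 s hs
          rcases eq_or_ne c (some s) with hcs | hcs
          · rw [if_pos hcs]
            have h2 : rem' s = rem s - 1 := by simp only [hrem']; rw [if_pos hcs]
            have h3 : 0 < rem s := hpos s hcs
            omega
          · rw [if_neg hcs]
            have h2 : rem' s = rem s := by simp only [hrem']; rw [if_neg hcs]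
            omega

lemma SD_feasible (u : Prof I S) (q : S → ℕ) (L : List I) (hnd : L.Nodup)
    (hcomp : ∀ i : I, i ∈ L) : Feasible q (SD u q L) := by
  intro s
  have h := (sdRun_spec u L q (fun _ => none) hnd).1 s
  have huniv : L.toFinset = (univ : Finset I) :=
    Finset.eq_univ_iff_forall.2 fun i => List.mem_toFinset.2 (hcomp i)
  rw [huniv] at h
  exact h

lemma SD_spec (u : Prof I S) (q : S → ℕ) (L : List I) (hnd : L.Nodup)
    (L₁ : List I) (i : I) (L₂ : List I) (hdec : L = L₁ ++ i :: L₂) :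
    ((u i).1 none ≤ (u i).1 (SD u q L i)) ∧
    (∀ s, (L₁.toFinset.filter fun j => SD u q L j = some s).card < q s →
      (u i).1 (some s) ≤ (u i).1 (SD u q L i)) ∧
    (∀ s, SD u q L i = some s →
      (L₁.toFinset.filter fun j => SD u q L j = some s).card < q s) :=
  (sdRun_spec u L q (fun _ => none) hnd).2 L₁ i L₂ hdec

/-! ### Putting things together -/

lemma nodup_decomp_not_mem_left {L L₁ L₂ : List I} {i : I} (hnd : L.Nodup)
    (hdec : L = L₁ ++ i :: L₂) : i ∉ L₁ := by
  rw [hdec] at hnd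
  intro h
  exact (List.disjoint_of_nodup_append hnd) h (List.mem_cons_self)

lemma le_SD_of_prefix (u : Prof I S) (q : S → ℕ) (L : List I) (hnd : L.Nodup)
    (L₁ : List I) (i : I) (L₂ : List I) (hdec : L = L₁ ++ i :: L₂)
    (μ : Matching I S) (hfe : Feasible q μ) (hpre : ∀ j ∈ L₁, μ j = SD u q L j) :
    (u i).1 (μ i) ≤ (u i).1 (SD u q L i) := by
  obtain ⟨hnone, havail, -⟩ := SD_spec u q L hnd L₁ i L₂ hdec
  have hiL₁ : i ∉ L₁ := nodup_decomp_not_mem_left hnd hdec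
  cases hμi : μ i with
  | none => exact hnone
  | some s =>
    apply havail s
    have hsub : insert i (L₁.toFinset.filter fun j => SD u q L j = some s)
        ⊆ univ.filter fun j => μ j = some s := by
      intro j hj
      rcases Finset.mem_insert.1 hj with rfl | hj
      · exact mem_filter.2 ⟨mem_univ _, hμi⟩
      · have hjL := List.mem_toFinset.1 (mem_filter.1 hj).1
        exact mem_filter.2 ⟨mem_univ _, (hpre j hjL).trans (mem_filter.1 hj).2⟩
    have hcard := (Finset.card_le_card hsub).trans (hfe s)
    rw [Finset.card_insert_of_notMem
      (fun h => hiL₁ (List.mem_toFinset.1 (mem_filter.1 h).1))] at hcard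
    omega

lemma eam_singleton_outcome (Q : Prof I S) (q : S → ℕ) (L : List I)
    (hcomp : ∀ i : I, i ∈ L) (c : I → Option S)
    (hacc : ∀ j, OnlyAcc (Q j) (c j)) (hfc : Feasible q c)
    (μ : Matching I S) (hout : IsEAMOutcome Q q L μ) : μ = c := by
  obtain ⟨μ₀, hμ₀, hrtg, -, -⟩ := hout
  have hcA : c ∈ {μ | Feasible q μ ∧ IndivRational Q μ} :=
    ⟨hfc, fun j => (hacc j).top none⟩
  have hforced := foldl_xiStep_forced Q q c L _ c (le_refl _) hcA
    (fun _ _ => rfl) (fun j _ => hacc j)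
  have hμ₀c : μ₀ = c := funext fun j => hforced μ₀ hμ₀ j (hcomp j)
  subst hμ₀c
  rcases Relation.ReflTransGen.cases_head hrtg with h | ⟨μ', hstep, -⟩
  · exact h.symm
  · exfalso
    rcases hstep with ⟨n, a, t, hc, -, -⟩ | ⟨n, a, t, hc, -, -⟩
    · exact absurd (hc.2.1 0) (not_lt.2 ((hacc (a 0)).top _))
    · have h2 := hc.2.2 0
      rw [← hc.2.1 0] at h2
      exact absurd h2 (not_lt.2 ((hacc (a 0)).top _))

lemma eam_deviation_le (u Q : Prof I S) (q : S → ℕ) (L : List I) (hnd : L.Nodup)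
    (hcomp : ∀ i : I, i ∈ L) (i : I)
    (hQ : ∀ j, j ≠ i → OnlyAcc (Q j) (SD u q L j))
    (μ : Matching I S) (hout : IsEAMOutcome Q q L μ) :
    (u i).1 (μ i) ≤ (u i).1 (SD u q L i) := by
  obtain ⟨L₁, L₂, hdec⟩ := List.append_of_mem (hcomp i)
  have hiL₁ : i ∉ L₁ := nodup_decomp_not_mem_left hnd hdec
  obtain ⟨μ₀, hμ₀, hrtg, -, -⟩ := hout
  have hw : Function.update (SD u q L) i none ∈
      {μ | Feasible q μ ∧ IndivRational Q μ} := by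
    constructor
    · intro s
      refine (Finset.card_le_card ?_).trans (SD_feasible u q L hnd hcomp s)
      intro j hj
      rcases eq_or_ne j i with rfl | hne
      · have := (mem_filter.1 hj).2
        rw [Function.update_self] at this
        exact absurd this (by simp)
      · refine mem_filter.2 ⟨mem_univ _, ?_⟩
        have := (mem_filter.1 hj).2
        rwa [Function.update_of_ne hne] at this
    · intro j
      rcases eq_or_ne j i with rfl | hne
      · rw [Function.update_self]
      · rw [Function.update_of_ne hne]
        exact (hQ j hne).top none
  have hforced := foldl_xiStep_forced Q q (SD u q L) L₁ _
    (Function.update (SD u q L) i none) (le_refl _) hw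
    (fun j hj => Function.update_of_ne (fun h => hiL₁ (by rw [← h]; exact hj)) _ _)
    (fun j hj => hQ j (fun h => hiL₁ (by rw [← h]; exact hj)))
  have hμ₀pre : ∀ j ∈ L₁, μ₀ j = SD u q L j := by
    have hμ₀' : μ₀ ∈ L₁.foldl xiStep {μ | Feasible q μ ∧ IndivRational Q μ} := by
      rw [xiList, hdec, List.foldl_append] at hμ₀
      exact foldl_xiStep_subset _ _ hμ₀
    exact fun j hj => hforced μ₀ hμ₀' j hj
  have hinv := rtg_invariants hrtg
  have hμ₀A : μ₀ ∈ {μ | Feasible q μ ∧ IndivRational Q μ} :=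
    foldl_xiStep_subset L _ hμ₀
  have hfe : Feasible q μ := hinv.1 hμ₀A.1
  have hpre : ∀ j ∈ L₁, μ j = SD u q L j := fun j hj =>
    hinv.2.2.2 j (SD u q L j)
      (fun x => (hQ j (fun h => hiL₁ (by rw [← h]; exact hj))).top x) (hμ₀pre j hj)
  exact le_SD_of_prefix u q L hnd L₁ i L₂ hdec μ hfe hpre

lemma update_none_mem_A₀ {Q R : Prof I S} {q : S → ℕ} (i : I)
    (hQR : ∀ j, j ≠ i → Q j = R j) (μ : Matching I S)
    (hμ : μ ∈ {μ : Matching I S | Feasible q μ ∧ IndivRational Q μ}) :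
    Function.update μ i none ∈ {μ : Matching I S | Feasible q μ ∧ IndivRational R μ} := by
  constructor
  · intro s
    refine (Finset.card_le_card ?_).trans (hμ.1 s)
    intro j hj
    rcases eq_or_ne j i with rfl | hne
    · have := (mem_filter.1 hj).2
      rw [Function.update_self] at this
      exact absurd this (by simp)
    · refine mem_filter.2 ⟨mem_univ _, ?_⟩
      have := (mem_filter.1 hj).2
      rwa [Function.update_of_ne hne] at this
  · intro j
    rcases eq_or_ne j i with rfl | hne
    · rw [Function.update_self]
    · rw [Function.update_of_ne hne, ← hQR j hne]
      exact hμ.2 j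

lemma nash_step (u : Prof I S) (q : S → ℕ) (L : List I) (hnd : L.Nodup)
    (hcomp : ∀ i : I, i ∈ L) (ψ : Mechanism I S) (hψ : IsEAMMech q L ψ)
    (P'' : Prof I S) (hnash : NashEq u ψ P'')
    (L₁ : List I) (i : I) (L₂ : List I) (hdec : L = L₁ ++ i :: L₂)
    (hpre : ∀ j ∈ L₁, ψ P'' j = SD u q L j) :
    ψ P'' i = SD u q L i := by
  have hiL₁ : i ∉ L₁ := nodup_decomp_not_mem_left hnd hdec
  obtain ⟨μ₀, hμ₀, hrtg, -, -⟩ := hψ P''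
  have hμ₀A : μ₀ ∈ {μ | Feasible q μ ∧ IndivRational P'' μ} :=
    foldl_xiStep_subset L _ hμ₀
  have hinv := rtg_invariants hrtg
  have hfe : Feasible q (ψ P'') := hinv.1 hμ₀A.1
  have hirP : IndivRational P'' (ψ P'') := hinv.2.1 hμ₀A.2
  have hle := le_SD_of_prefix u q L hnd L₁ i L₂ hdec (ψ P'') hfe hpre
  -- ≥ direction via deviation
  cases hσi : SD u q L i with
  | none =>
    -- deviate to reporting nothing acceptable
    set Q : Prof I S := Function.update P'' i (singlePref none) with hQdef
    have hQi : Q i = singlePref none := Function.update_self _ _ _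
    obtain ⟨ν₀, hν₀, hrtgQ, -, -⟩ := hψ Q
    have hν₀A : ν₀ ∈ {μ | Feasible q μ ∧ IndivRational Q μ} :=
      foldl_xiStep_subset L _ hν₀
    have hirQ : IndivRational Q (ψ Q) := (rtg_invariants hrtgQ).2.1 hν₀A.2
    have hQnone : ψ Q i = none := by
      have hoa : OnlyAcc (Q i) none := by rw [hQi]; exact onlyAcc_singlePref none
      rcases hoa.ir_eq (hirQ i) with h | h <;> exact h
    have hge : (u i).1 none ≤ (u i).1 (ψ P'' i) := by
      have := hnash i (singlePref none)
      rw [← hQdef, hQnone] at this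
      exact this
    rw [hσi] at hle
    have := le_antisymm hle hge
    exact (u i).2 this
  | some s =>
    set es := singlePref (some s) with hes
    set Q : Prof I S := Function.update P'' i es with hQdef
    have hQi : Q i = es := Function.update_self _ _ _
    have hQoff : ∀ j, j ≠ i → Q j = P'' j := fun j hj => Function.update_of_ne hj _ _
    have hoa : OnlyAcc (Q i) (some s) := by rw [hQi, hes]; exact onlyAcc_singlePref _
    obtain ⟨-, -, hcnt⟩ := SD_spec u q L hnd L₁ i L₂ hdec
    have hcnts : (L₁.toFinset.filter fun j => SD u q L j = some s).card < q s :=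
      hcnt s hσi
    -- build a witness ν ∈ A₀(Q) assigning i to s, agreeing with ψ P'' on L₁,
    -- and assigned wherever ψ P'' is assigned on L₁
    have hwitness : ∃ ν : Matching I S,
        ν ∈ {μ : Matching I S | Feasible q μ ∧ IndivRational Q μ} ∧
        ν i = some s ∧ (∀ j ∈ L₁, ν j = ψ P'' j) := by
      by_cases hj₀ : ∃ j₀, ψ P'' j₀ = some s ∧ j₀ ∉ L₁ ∧ j₀ ≠ i
      · obtain ⟨j₀, hj₀s, hj₀L₁, hj₀i⟩ := hj₀
        refine ⟨Function.update (Function.update (ψ P'') j₀ none) i (some s),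
          ⟨?_, ?_⟩, Function.update_self _ _ _, ?_⟩
        · -- feasibility
          intro s'
          have hinner : ∀ s'', (univ.filter fun j =>
              Function.update (ψ P'') j₀ none j = some s'') ⊆
              univ.filter fun j => ψ P'' j = some s'' := by
            intro s'' j hj
            rcases eq_or_ne j j₀ with rfl | hne
            · have := (mem_filter.1 hj).2
              rw [Function.update_self] at this
              exact absurd this (by simp)
            · refine mem_filter.2 ⟨mem_univ _, ?_⟩
              have := (mem_filter.1 hj).2
              rwa [Function.update_of_ne hne] at this
          rcases eq_or_ne s' s with rfl | hne
          · -- target school: i added, but j₀ removed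
            have hsub : (univ.filter fun j =>
                Function.update (Function.update (ψ P'') j₀ none) i (some s') j = some s')
                ⊆ insert i ((univ.filter fun j => ψ P'' j = some s').erase j₀) := by
              intro j hj
              rcases eq_or_ne j i with rfl | hne
              · exact Finset.mem_insert_self _ _
              · refine Finset.mem_insert_of_mem (Finset.mem_erase.2 ⟨?_, ?_⟩)
                · intro h
                  subst h
                  have := (mem_filter.1 hj).2
                  rw [Function.update_of_ne hne, Function.update_self] at this
                  simp at this
                · have := (mem_filter.1 hj).2
                  rw [Function.update_of_ne hne] at this
                  exact hinner s' (mem_filter.2 ⟨mem_univ _, this⟩)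
            have hj₀mem : j₀ ∈ univ.filter fun j => ψ P'' j = some s' :=
              mem_filter.2 ⟨mem_univ _, hj₀s⟩
            have h1 := Finset.card_le_card hsub
            have h2 := Finset.card_insert_le i ((univ.filter fun j => ψ P'' j = some s').erase j₀)
            have h3 := Finset.card_erase_add_one hj₀mem
            have h4 := hfe s'
            omega
          · -- other schools: occupancy only decreases
            refine (Finset.card_le_card ?_).trans (hfe s')
            intro j hj
            rcases eq_or_ne j i with rfl | hnei
            · have := (mem_filter.1 hj).2
              rw [Function.update_self] at this
              exact absurd (Option.some.inj this).symm hne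
            · have := (mem_filter.1 hj).2
              rw [Function.update_of_ne hnei] at this
              exact hinner s' (mem_filter.2 ⟨mem_univ _, this⟩)
        · -- individual rationality
          intro j
          rcases eq_or_ne j i with rfl | hnei
          · rw [Function.update_self]
            exact le_of_lt ((hoa s).2 rfl)
          · rw [Function.update_of_ne hnei, hQoff j hnei]
            rcases eq_or_ne j j₀ with rfl | hnej₀
            · rw [Function.update_self]
            · rw [Function.update_of_ne hnej₀]
              exact hirP j
        · intro j hj
          have hnei : j ≠ i := fun h => hiL₁ (by rw [← h]; exact hj)
          have hnej₀ : j ≠ j₀ := fun h => hj₀L₁ (by rw [← h]; exact hj)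
          rw [Function.update_of_ne hnei, Function.update_of_ne hnej₀]
      · -- all occupants of s (other than i) are in L₁
        push_neg at hj₀
        refine ⟨Function.update (ψ P'') i (some s),
          ⟨?_, ?_⟩, Function.update_self _ _ _, ?_⟩
        · intro s'
          rcases eq_or_ne s' s with rfl | hne
          · have hsub : (univ.filter fun j =>
                Function.update (ψ P'') i (some s') j = some s')
                ⊆ insert i (L₁.toFinset.filter fun j => SD u q L j = some s') := by
              intro j hj
              rcases eq_or_ne j i with rfl | hnei
              · exact Finset.mem_insert_self _ _
              · have hjs : ψ P'' j = some s' := by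
                  have := (mem_filter.1 hj).2
                  rwa [Function.update_of_ne hnei] at this
                have hjL₁ : j ∈ L₁ := by
                  by_contra hjn
                  exact hnei (hj₀ j hjs hjn)
                refine Finset.mem_insert_of_mem (mem_filter.2
                  ⟨List.mem_toFinset.2 hjL₁, ?_⟩)
                rw [← hpre j hjL₁]
                exact hjs
            have h1 := Finset.card_le_card hsub
            have h2 := Finset.card_insert_le i
              (L₁.toFinset.filter fun j => SD u q L j = some s')
            omega
          · refine (Finset.card_le_card ?_).trans (hfe s')
            intro j hj
            rcases eq_or_ne j i with rfl | hnei
            · have := (mem_filter.1 hj).2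
              rw [Function.update_self] at this
              exact absurd (Option.some.inj this).symm hne
            · refine mem_filter.2 ⟨mem_univ _, ?_⟩
              have := (mem_filter.1 hj).2
              rwa [Function.update_of_ne hnei] at this
        · intro j
          rcases eq_or_ne j i with rfl | hnei
          · rw [Function.update_self]
            exact le_of_lt ((hoa s).2 rfl)
          · rw [Function.update_of_ne hnei, hQoff j hnei]
            exact hirP j
        · intro j hj
          exact Function.update_of_ne (fun h => hiL₁ (by rw [← h]; exact hj)) _ _
    obtain ⟨ν, hνA, hνi, hνL₁⟩ := hwitness
    -- the first-stage set of Q after L₁ contains a matching assigning i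
    have hpair := foldl_xiStep_pair i L₁ hiL₁
      {μ : Matching I S | Feasible q μ ∧ IndivRational P'' μ}
      {μ : Matching I S | Feasible q μ ∧ IndivRational Q μ}
      (fun μ hμ => update_none_mem_A₀ i (fun j hj => (hQoff j hj).symm) μ hμ)
      (fun μ hμ => update_none_mem_A₀ i (fun j hj => hQoff j hj) μ hμ)
    have hμ₀L₁ : μ₀ ∈ L₁.foldl xiStep {μ | Feasible q μ ∧ IndivRational P'' μ} := by
      rw [xiList, hdec, List.foldl_append] at hμ₀
      exact foldl_xiStep_subset _ _ hμ₀
    have hκ : Function.update μ₀ i none ∈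
        L₁.foldl xiStep {μ : Matching I S | Feasible q μ ∧ IndivRational Q μ} :=
      hpair.1 μ₀ hμ₀L₁
    have hνmem : ν ∈ L₁.foldl xiStep
        {μ : Matching I S | Feasible q μ ∧ IndivRational Q μ} := by
      refine mem_foldl_xiStep L₁ _ (Function.update μ₀ i none) ν hκ hνA ?_
      intro j hj hjne
      have hnei : j ≠ i := fun h => hiL₁ (by rw [← h]; exact hj)
      rw [Function.update_of_ne hnei] at hjne
      rw [hνL₁ j hj]
      exact hinv.2.2.1 j hjne
    -- run the EAM first stage for Q
    obtain ⟨ν₀, hν₀, hrtgQ, -, -⟩ := hψ Q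
    have hinvQ := rtg_invariants hrtgQ
    have hν₀i : ν₀ i = some s := by
      have hν₀mem : ν₀ ∈ (i :: L₂).foldl xiStep
          (L₁.foldl xiStep {μ : Matching I S | Feasible q μ ∧ IndivRational Q μ}) := by
        rw [xiList, hdec, List.foldl_append] at hν₀
        exact hν₀
      rw [List.foldl_cons] at hν₀mem
      have hex : ∃ μ' ∈ L₁.foldl xiStep
          {μ : Matching I S | Feasible q μ ∧ IndivRational Q μ}, μ' i ≠ none :=
        ⟨ν, hνmem, by rw [hνi]; simp⟩
      have hstep : xiStep (L₁.foldl xiStep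
          {μ : Matching I S | Feasible q μ ∧ IndivRational Q μ}) i
          = {μ' ∈ L₁.foldl xiStep
            {μ : Matching I S | Feasible q μ ∧ IndivRational Q μ} | μ' i ≠ none} := by
        rw [xiStep, if_pos hex]
      have hν₀' := foldl_xiStep_subset L₂ _ hν₀mem
      rw [hstep] at hν₀'
      have hν₀ne : ν₀ i ≠ none := hν₀'.2
      have hν₀A' : ν₀ ∈ {μ : Matching I S | Feasible q μ ∧ IndivRational Q μ} :=
        foldl_xiStep_subset L₁ _ hν₀'.1
      rcases hoa.ir_eq (hν₀A'.2 i) with h | h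
      · exact absurd h hν₀ne
      · exact h
    have hψQi : ψ Q i = some s :=
      hinvQ.2.2.2 i (some s) (fun x => hoa.top x) hν₀i
    have hge : (u i).1 (some s) ≤ (u i).1 (ψ P'' i) := by
      have := hnash i es
      rw [← hQdef, hψQi] at this
      exact this
    rw [hσi] at hle
    have := le_antisymm hle hge
    exact (u i).2 this

end AuxLemmas

/-- under an EAM mechanism, any profile in which each student
reports as acceptable exactly the school assigned to them by the serial
dictatorship (same ordering, true preferences) is a Nash equilibrium, and
every Nash equilibrium outcome coincides with the serial dictatorship
outcome under true preferences. -/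
theorem EAM_equilibrium_is_SD
    (q : S → ℕ) (L : List I) (hnd : L.Nodup) (hcomp : ∀ i : I, i ∈ L)
    (ψ : Mechanism I S) (hψ : IsEAMMech q L ψ) (u : Prof I S) :
    (∀ P' : Prof I S,
      (∀ i s, (P' i).1 none < (P' i).1 (some s) ↔ some s = SD u q L i) →
        NashEq u ψ P') ∧
    ∀ P'' : Prof I S, NashEq u ψ P'' → ψ P'' = SD u q L := by
  constructor
  · -- the SD-truthful singleton profile is a Nash equilibrium
    intro P' hP'
    have hacc : ∀ j, OnlyAcc (P' j) (SD u q L j) := fun j s => hP' j s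
    intro i Pi''
    have hψP' : ψ P' = SD u q L :=
      eam_singleton_outcome P' q L hcomp _ hacc (SD_feasible u q L hnd hcomp) _ (hψ P')
    rw [hψP']
    exact eam_deviation_le u (Function.update P' i Pi'') q L hnd hcomp i
      (fun j hj => by rw [Function.update_of_ne hj]; exact hacc j) _ (hψ _)
  · -- every Nash equilibrium outcome is the SD outcome
    intro P'' hnash
    have main : ∀ k : ℕ, ∀ j ∈ L.take k, ψ P'' j = SD u q L j := by
      intro k
      induction k with
      | zero => simp
      | succ k ih =>
        intro j hj
        rw [List.take_succ] at hj
        rcases List.mem_append.1 hj with hj | hj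
        · exact ih j hj
        · rcases hk : L[k]? with _ | jk
          · rw [hk] at hj; simp at hj
          · rw [hk] at hj
            simp only [Option.toList_some, List.mem_singleton] at hj
            subst hj
            have hklt : k < L.length := by
              by_contra h
              rw [List.getElem?_eq_none (le_of_not_gt h)] at hk
              exact absurd hk (by simp)
            have hjk : j = L[k] := by
              rw [List.getElem?_eq_getElem hklt] at hk
              exact (Option.some.inj hk).symm
            have hdec : L = L.take k ++ L[k] :: L.drop (k+1) := by
              conv_lhs => rw [← List.take_append_drop k L]
              rw [List.drop_eq_getElem_cons hklt]
            rw [hjk]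
            exact nash_step u q L hnd hcomp ψ hψ P'' hnash _ _ _ hdec
              (fun j' hj' => ih j' hj')
    funext i
    obtain ⟨k, hk, hik⟩ := List.mem_iff_getElem.1 (hcomp i)
    have hmem : i ∈ L.take (k+1) := by
      subst hik
      have h := List.take_succ (l := L) (i := k)
      rw [h, List.getElem?_eq_getElem hk]
      exact List.mem_append_right _ (by simp)
    exact main (k+1) i hmem
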